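/- Let L be the free graded Lie algebra over ℚ on generators χ₁, ..., χ_{m+1} of degrees 5, 9, ..., 4(m+1)+1 with m ≥ 3, truncated above degree 4m+5. Define automorphisms f and g by: f fixes all generators except χ_m, which it sends to χ_m + α₁[χ₁, χ_{m-1}] with α₁ ≠ 0; g fixes all generators except χ_{m+1}, which it sends to χ_{m+1} + α₂[χ₁, χ_m] with α₂ ≠ 0. Then (f ∘ g)(χ_{m+1}) = χ_{m+1} + α₂[χ₁, χ_m] + α₁α₂[χ₁,[χ₁,χ_{m-1}]] while (g ∘ f)(χ_{m+1}) = χ_{m+1} + α₂[χ₁, χ_m], and since [χ₁,[χ₁,χ_{m-1}]] ≠ 0 in the free graded Lie algebra, f ∘ g ≠ g ∘ f. Hence the automorphism group of L is non-abelian. -/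
import Mathlib


/-!
STATEMENT 12.  `L` is the free graded Lie algebra over `ℚ` on generators `χ₁, …, χ_{m+1}` of
degrees `5, 9, …, 4(m+1)+1` (`m ≥ 3`), truncated above degree `4m+5`.  We encode it by a
`ℚ`-module `L` with bilinear bracket `b`, generators `χ i` (`i = 1, …, m+1`), and the relevant
consequence of Hilton's theorem: `χ_{m+1}`, `[χ₁,χ_m]` and `[χ₁,[χ₁,χ_{m-1}]]` are linearly
independent.  `f` and `g` are bracket-preserving automorphisms with
`f(χ_m) = χ_m + α₁[χ₁,χ_{m-1}]`, `g(χ_{m+1}) = χ_{m+1} + α₂[χ₁,χ_m]` (`α₁, α₂ ≠ 0`), fixing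
all other generators.  Conclusion:
`(f ∘ g)(χ_{m+1}) = χ_{m+1} + α₂[χ₁,χ_m] + α₁α₂[χ₁,[χ₁,χ_{m-1}]]`,
`(g ∘ f)(χ_{m+1}) = χ_{m+1} + α₂[χ₁,χ_m]`, `f ∘ g ≠ g ∘ f`, and hence the automorphism
group of `L` is non-abelian. -/
theorem stmt12 (L : Type) [AddCommGroup L] [Module ℚ L]
    (b : L →ₗ[ℚ] L →ₗ[ℚ] L) (m : ℕ) (hm : 3 ≤ m) (χ : ℕ → L)
    (hindep : LinearIndependent ℚ
      ![χ (m+1), b (χ 1) (χ m), b (χ 1) (b (χ 1) (χ (m-1)))])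
    (α₁ α₂ : ℚ) (hα₁ : α₁ ≠ 0) (hα₂ : α₂ ≠ 0)
    (f g : L ≃ₗ[ℚ] L)
    (hfb : ∀ u v : L, f (b u v) = b (f u) (f v))
    (hgb : ∀ u v : L, g (b u v) = b (g u) (g v))
    (hf : ∀ i, 1 ≤ i → i ≤ m + 1 → i ≠ m → f (χ i) = χ i)
    (hfm : f (χ m) = χ m + α₁ • b (χ 1) (χ (m-1)))
    (hg : ∀ i, 1 ≤ i → i ≤ m + 1 → i ≠ m + 1 → g (χ i) = χ i)
    (hgm : g (χ (m+1)) = χ (m+1) + α₂ • b (χ 1) (χ m)) :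
    f (g (χ (m+1)))
        = χ (m+1) + α₂ • b (χ 1) (χ m) + (α₁ * α₂) • b (χ 1) (b (χ 1) (χ (m-1))) ∧
    g (f (χ (m+1))) = χ (m+1) + α₂ • b (χ 1) (χ m) ∧
    g.trans f ≠ f.trans g ∧
    ∃ f' g' : {φ : L ≃ₗ[ℚ] L // ∀ u v : L, φ (b u v) = b (φ u) (φ v)},
      f'.1.trans g'.1 ≠ g'.1.trans f'.1 := by
  have hf1 : f (χ 1) = χ 1 := hf 1 le_rfl (by omega) (by omega)
  have hfm1 : f (χ (m+1)) = χ (m+1) := hf (m+1) (by omega) le_rfl (by omega)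
  have h1 : f (g (χ (m+1)))
      = χ (m+1) + α₂ • b (χ 1) (χ m) + (α₁ * α₂) • b (χ 1) (b (χ 1) (χ (m-1))) := by
    rw [hgm, map_add, map_smul, hfb, hfm1, hf1, hfm, map_add, map_smul, smul_add,
      smul_smul, mul_comm α₂ α₁, add_assoc]
  have h2 : g (f (χ (m+1))) = χ (m+1) + α₂ • b (χ 1) (χ m) := by
    rw [hfm1, hgm]
  have hne : g.trans f ≠ f.trans g := by
    intro h
    have := congrArg (fun e : L ≃ₗ[ℚ] L => e (χ (m+1))) h
    simp only [LinearEquiv.trans_apply] at this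
    rw [h1, h2] at this
    have hz : (α₁ * α₂) • b (χ 1) (b (χ 1) (χ (m-1))) = 0 := by
      have h' := this.symm
      rw [left_eq_add] at h'
      exact h'
    have hv : b (χ 1) (b (χ 1) (χ (m-1))) ≠ 0 := by
      have := hindep.ne_zero 2
      simpa using this
    rcases smul_eq_zero.mp hz with h' | h'
    · exact (mul_ne_zero hα₁ hα₂) h'
    · exact hv h'
  exact ⟨h1, h2, hne, ⟨g, hgb⟩, ⟨f, hfb⟩, hne⟩
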